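/- arXiv:2101.05113 — 2 statements merged into one kernel-verified Lean document; each statement's English description precedes it below -/
import Mathlib

section
/- Suppose the linear map 𝒜 satisfies the rank-2r RIP with constant δ_{2r}. Then for every matrix M₁ ∈ ℝ^{n₁×n₂} of rank at most r and every matrix A ∈ ℝ^{n₂×r}, one has ‖[(𝒜*𝒜 − ℐ)(M₁)]·A‖_F ≤ δ_{2r}‖M₁‖_F‖A‖, where ‖A‖ denotes the spectral norm of A and ℐ is the identity map. -/
open Matrix BigOperators

/-- Frobenius norm of a real matrix. -/
noncomputable def frobNorm {m n : ℕ} (A : Matrix (Fin m) (Fin n) ℝ) : ℝ :=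
  Real.sqrt (∑ i, ∑ j, (A i j) ^ 2)

/-- Spectral norm (largest singular value) of a real matrix. -/
noncomputable def specNorm {m n : ℕ} (A : Matrix (Fin m) (Fin n) ℝ) : ℝ :=
  ‖LinearMap.toContinuousLinearMap (Matrix.toEuclideanLin A)‖

/-- Smallest singular value of a matrix with `r` columns (the `r`-th largest singular value). -/
noncomputable def sigmaMinCol {m r : ℕ} (A : Matrix (Fin m) (Fin r) ℝ) : ℝ :=
  sInf { s | ∃ v : EuclideanSpace ℝ (Fin r), ‖v‖ = 1 ∧ s = ‖Matrix.toEuclideanLin A v‖ }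

/-- Matrix inner product `⟨A, B⟩ = Tr(Bᵀ A)`. -/
noncomputable def matInner {m n : ℕ} (A B : Matrix (Fin m) (Fin n) ℝ) : ℝ :=
  Matrix.trace (Bᵀ * A)

/-- Euclidean norm on `ℝ^m`. -/
noncomputable def vec2Norm {m : ℕ} (y : Fin m → ℝ) : ℝ :=
  Real.sqrt (∑ i, (y i) ^ 2)

/-- The sensing operator `𝒜(M) = (⟨A_i, M⟩)_{i=1..m}`. -/
noncomputable def senseOp {n₁ n₂ m : ℕ} (As : Fin m → Matrix (Fin n₁) (Fin n₂) ℝ)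
    (M : Matrix (Fin n₁) (Fin n₂) ℝ) : Fin m → ℝ :=
  fun i => matInner (As i) M

/-- The adjoint operator `𝒜*(y) = ∑ i, y i • A i`. -/
noncomputable def senseAdj {n₁ n₂ m : ℕ} (As : Fin m → Matrix (Fin n₁) (Fin n₂) ℝ)
    (y : Fin m → ℝ) : Matrix (Fin n₁) (Fin n₂) ℝ :=
  ∑ i, y i • As i

/-- Rank-`k` restricted isometry property with constant `δ`. -/
def HasRIP {n₁ n₂ m : ℕ} (As : Fin m → Matrix (Fin n₁) (Fin n₂) ℝ) (k : ℕ) (δ : ℝ) : Prop :=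
  0 ≤ δ ∧ δ < 1 ∧
  ∀ M : Matrix (Fin n₁) (Fin n₂) ℝ, M.rank ≤ k →
    (1 - δ) * (frobNorm M) ^ 2 ≤ (vec2Norm (senseOp As M)) ^ 2 ∧
    (vec2Norm (senseOp As M)) ^ 2 ≤ (1 + δ) * (frobNorm M) ^ 2

/-- dist(Z, Z⋆): infimum over invertible `P` of
`sqrt(‖XP − X⋆‖_F² + ‖YP⁻ᵀ − Y⋆‖_F²)`. -/
noncomputable def distZ {n₁ n₂ r : ℕ} (X Xs : Matrix (Fin n₁) (Fin r) ℝ)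
    (Y Ys : Matrix (Fin n₂) (Fin r) ℝ) : ℝ :=
  sInf { v | ∃ P : Matrix (Fin r) (Fin r) ℝ, IsUnit P ∧
    v = Real.sqrt ((frobNorm (X * P - Xs)) ^ 2 + (frobNorm (Y * (P⁻¹)ᵀ - Ys)) ^ 2) }

open Finset
private lemma matInner_eq {m n : ℕ} (A B : Matrix (Fin m) (Fin n) ℝ) :
    matInner A B = ∑ i, ∑ j, A i j * B i j := by
  simp [matInner, Matrix.trace, Matrix.diag, Matrix.mul_apply, mul_comm]
  rw [Finset.sum_comm]

private lemma sq_frobNorm {m n : ℕ} (A : Matrix (Fin m) (Fin n) ℝ) :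
    frobNorm A ^ 2 = ∑ i, ∑ j, (A i j) ^ 2 := by
  rw [frobNorm, Real.sq_sqrt]; positivity

private lemma frobNorm_nonneg {m n : ℕ} (A : Matrix (Fin m) (Fin n) ℝ) : 0 ≤ frobNorm A :=
  Real.sqrt_nonneg _

private lemma eq_zero_of_frobNorm_eq_zero {m n : ℕ} {A : Matrix (Fin m) (Fin n) ℝ}
    (h : frobNorm A = 0) : A = 0 := by
  have h2 : (∑ i, ∑ j, (A i j) ^ 2) = 0 := by
    have := sq_frobNorm A; rw [h] at this; simpa using this.symm
  ext i j
  have hi := (Finset.sum_eq_zero_iff_of_nonneg (fun i _ => by positivity)).mp h2 i (mem_univ i)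
  have hj := (Finset.sum_eq_zero_iff_of_nonneg (fun j _ => by positivity)).mp hi j (mem_univ j)
  simpa using pow_eq_zero_iff (n := 2) (by norm_num) |>.mp hj

private lemma rank_add_smul_le {n₁ n₂ : ℕ} (M N : Matrix (Fin n₁) (Fin n₂) ℝ) (c : ℝ) :
    (M + c • N).rank ≤ M.rank + N.rank := by
  rcases eq_or_ne c 0 with rfl | hc
  · simp
  · have h1 : (M + c • N).rank ≤ M.rank + (c • N).rank := by
      unfold Matrix.rank
      have hr : LinearMap.range (M + c • N).mulVecLin ≤
          LinearMap.range M.mulVecLin ⊔ LinearMap.range (c • N).mulVecLin := by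
        rintro x ⟨v, rfl⟩
        rw [Matrix.mulVecLin_add]
        exact Submodule.add_mem_sup ⟨v, rfl⟩ ⟨v, rfl⟩
      exact (Submodule.finrank_mono hr).trans
        (Submodule.finrank_add_le_finrank_add_finrank _ _)
    have h2 : (c • N).rank = N.rank := by
      have hmv : (c • N).mulVecLin = c • N.mulVecLin := by
        ext v i; simp [Matrix.mulVecLin, Matrix.mulVec, dotProduct, Finset.mul_sum, mul_assoc, Pi.single_apply, mul_ite, mul_zero]
      have hrange : LinearMap.range (c • N).mulVecLin = LinearMap.range N.mulVecLin := by
        rw [hmv]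
        apply le_antisymm
        · rintro x ⟨v, rfl⟩; exact ⟨c • v, by simp [_root_.map_smul]⟩
        · rintro x ⟨v, rfl⟩; exact ⟨c⁻¹ • v, by simp [_root_.map_smul, smul_smul, hc]⟩
      rw [Matrix.rank, Matrix.rank, hrange]
    omega

private lemma sum2_expand {m n : ℕ} (f g : Fin m → Fin n → ℝ) (t : ℝ) :
    ∑ i, ∑ j, (f i j + t * g i j) ^ 2 =
      (∑ i, ∑ j, f i j ^ 2) + 2 * t * (∑ i, ∑ j, f i j * g i j)
        + t ^ 2 * (∑ i, ∑ j, g i j ^ 2) := by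
  simp only [Finset.mul_sum, ← Finset.sum_add_distrib]
  exact Finset.sum_congr rfl fun i _ => Finset.sum_congr rfl fun j _ => by ring

private lemma sum1_expand {m : ℕ} (f g : Fin m → ℝ) (t : ℝ) :
    ∑ i, (f i + t * g i) ^ 2 =
      (∑ i, f i ^ 2) + 2 * t * (∑ i, f i * g i) + t ^ 2 * (∑ i, g i ^ 2) := by
  simp only [Finset.mul_sum, ← Finset.sum_add_distrib]
  exact Finset.sum_congr rfl fun i _ => by ring

private lemma sq_vec2Norm {m : ℕ} (y : Fin m → ℝ) : vec2Norm y ^ 2 = ∑ i, (y i) ^ 2 := by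
  rw [vec2Norm, Real.sq_sqrt]; positivity

private lemma senseOp_add_smul {n₁ n₂ m : ℕ} (As : Fin m → Matrix (Fin n₁) (Fin n₂) ℝ)
    (M N : Matrix (Fin n₁) (Fin n₂) ℝ) (t : ℝ) (i : Fin m) :
    senseOp As (M + t • N) i = senseOp As M i + t * senseOp As N i := by
  simp only [senseOp, matInner_eq, Matrix.add_apply, Matrix.smul_apply, smul_eq_mul,
    Finset.mul_sum, ← Finset.sum_add_distrib]
  exact Finset.sum_congr rfl fun a _ => Finset.sum_congr rfl fun b _ => by ring

private lemma frob_sq_add_smul {n₁ n₂ : ℕ} (M N : Matrix (Fin n₁) (Fin n₂) ℝ) (t : ℝ) :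
    frobNorm (M + t • N) ^ 2 =
      frobNorm M ^ 2 + 2 * t * matInner M N + t ^ 2 * frobNorm N ^ 2 := by
  rw [sq_frobNorm, sq_frobNorm, sq_frobNorm, matInner_eq, ← sum2_expand M N t]
  exact Finset.sum_congr rfl fun i _ => Finset.sum_congr rfl fun j _ => by
    rw [Matrix.add_apply, Matrix.smul_apply, smul_eq_mul]

private lemma rip_cross {n₁ n₂ m r : ℕ} (As : Fin m → Matrix (Fin n₁) (Fin n₂) ℝ) (δ : ℝ)
    (hRIP : HasRIP As (2 * r) δ)
    (M N : Matrix (Fin n₁) (Fin n₂) ℝ) (hM : M.rank ≤ r) (hN : N.rank ≤ r) :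
    (∑ i, senseOp As M i * senseOp As N i) - matInner M N ≤
      δ * frobNorm M * frobNorm N := by
  obtain ⟨hδ0, hδ1, hrip⟩ := hRIP
  have key : ∀ t : ℝ, 0 ≤ t →
      t * ((∑ i, senseOp As M i * senseOp As N i) - matInner M N) ≤
        δ / 2 * (frobNorm M ^ 2 + t ^ 2 * frobNorm N ^ 2) := by
    intro t ht
    have hr1 : (M + t • N).rank ≤ 2 * r :=
      (rank_add_smul_le M N t).trans (by omega)
    have hr2 : (M + (-t) • N).rank ≤ 2 * r :=
      (rank_add_smul_le M N (-t)).trans (by omega)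
    have h1 := (hrip _ hr1).2
    have h2 := (hrip _ hr2).1
    have e1 : vec2Norm (senseOp As (M + t • N)) ^ 2 =
        (∑ i, senseOp As M i ^ 2) + 2 * t * (∑ i, senseOp As M i * senseOp As N i)
          + t ^ 2 * (∑ i, senseOp As N i ^ 2) := by
      rw [sq_vec2Norm,
        Finset.sum_congr rfl (fun i _ => by rw [senseOp_add_smul As M N t i]),
        sum1_expand]
    have e2 : vec2Norm (senseOp As (M + (-t) • N)) ^ 2 =
        (∑ i, senseOp As M i ^ 2) + 2 * (-t) * (∑ i, senseOp As M i * senseOp As N i)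
          + (-t) ^ 2 * (∑ i, senseOp As N i ^ 2) := by
      rw [sq_vec2Norm,
        Finset.sum_congr rfl (fun i _ => by rw [senseOp_add_smul As M N (-t) i]),
        sum1_expand]
    rw [e1, frob_sq_add_smul] at h1
    rw [e2, frob_sq_add_smul] at h2
    nlinarith [h1, h2]
  rcases eq_or_lt_of_le (frobNorm_nonneg M) with hfM0 | hfM0
  · have hMz : M = 0 := eq_zero_of_frobNorm_eq_zero hfM0.symm
    have hs : (∑ i, senseOp As M i * senseOp As N i) = 0 := by
      rw [hMz]; simp [senseOp, matInner_eq]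
    have hi : matInner M N = 0 := by rw [hMz]; simp [matInner_eq]
    rw [hs, hi]
    simpa using mul_nonneg (mul_nonneg hδ0 (frobNorm_nonneg M)) (frobNorm_nonneg N)
  rcases eq_or_lt_of_le (frobNorm_nonneg N) with hfN0 | hfN0
  · have hNz : N = 0 := eq_zero_of_frobNorm_eq_zero hfN0.symm
    have hs : (∑ i, senseOp As M i * senseOp As N i) = 0 := by
      rw [hNz]; simp [senseOp, matInner_eq]
    have hi : matInner M N = 0 := by rw [hNz]; simp [matInner_eq]
    rw [hs, hi]
    simpa using mul_nonneg (mul_nonneg hδ0 (frobNorm_nonneg M)) (frobNorm_nonneg N)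
  · have hfNne : frobNorm N ≠ 0 := ne_of_gt hfN0
    have ht : (0:ℝ) ≤ frobNorm M / frobNorm N := by positivity
    have hkey := key (frobNorm M / frobNorm N) ht
    have hsq : (frobNorm M / frobNorm N) ^ 2 * frobNorm N ^ 2 = frobNorm M ^ 2 := by
      field_simp
    rw [hsq] at hkey
    have h3 : frobNorm M * ((∑ i, senseOp As M i * senseOp As N i) - matInner M N)
        ≤ frobNorm M * (δ * frobNorm M * frobNorm N) := by
      have h4 := mul_le_mul_of_nonneg_left hkey (le_of_lt hfN0)
      have h5 : frobNorm N * (frobNorm M / frobNorm N *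
          ((∑ i, senseOp As M i * senseOp As N i) - matInner M N)) =
          frobNorm M * ((∑ i, senseOp As M i * senseOp As N i) - matInner M N) := by
        field_simp
      rw [h5] at h4
      calc frobNorm M * ((∑ i, senseOp As M i * senseOp As N i) - matInner M N)
          ≤ frobNorm N * (δ / 2 * (frobNorm M ^ 2 + frobNorm M ^ 2)) := h4
        _ = frobNorm M * (δ * frobNorm M * frobNorm N) := by ring
    exact le_of_mul_le_mul_left h3 hfM0

private lemma specNorm_nonneg {m n : ℕ} (A : Matrix (Fin m) (Fin n) ℝ) : 0 ≤ specNorm A :=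
  norm_nonneg _

private lemma frob_mul_transpose_le {n₁ n₂ r : ℕ} (B : Matrix (Fin n₁) (Fin r) ℝ)
    (A : Matrix (Fin n₂) (Fin r) ℝ) :
    frobNorm (B * Aᵀ) ≤ frobNorm B * specNorm A := by
  have row : ∀ i, (∑ j, ((B * Aᵀ) i j) ^ 2) ≤ specNorm A ^ 2 * ∑ k, (B i k) ^ 2 := by
    intro i
    set v : EuclideanSpace ℝ (Fin r) := (WithLp.equiv 2 (Fin r → ℝ)).symm (fun k => B i k) with hv
    have hvn : ‖v‖ ^ 2 = ∑ k, (B i k) ^ 2 := by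
      rw [EuclideanSpace.norm_eq, Real.sq_sqrt (by positivity)]
      simp [hv, sq_abs]
    have happ : ∀ j, (Matrix.toEuclideanLin A v) j = (B * Aᵀ) i j := by
      intro j
      rw [Matrix.toEuclideanLin_apply]
      simp [hv, Matrix.mulVec, dotProduct, Matrix.mul_apply, mul_comm]
    have hop : ‖Matrix.toEuclideanLin A v‖ ≤ specNorm A * ‖v‖ := by
      have := (LinearMap.toContinuousLinearMap (Matrix.toEuclideanLin A)).le_opNorm v
      simpa [specNorm] using this
    have hln : ‖Matrix.toEuclideanLin A v‖ ^ 2 = ∑ j, ((B * Aᵀ) i j) ^ 2 := by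
      rw [EuclideanSpace.norm_eq, Real.sq_sqrt (by positivity)]
      exact Finset.sum_congr rfl fun j _ => by rw [Real.norm_eq_abs, sq_abs, happ]
    calc (∑ j, ((B * Aᵀ) i j) ^ 2) = ‖Matrix.toEuclideanLin A v‖ ^ 2 := hln.symm
      _ ≤ (specNorm A * ‖v‖) ^ 2 := by
          apply pow_le_pow_left₀ (norm_nonneg _) hop
      _ = specNorm A ^ 2 * ∑ k, (B i k) ^ 2 := by rw [mul_pow, hvn]
  have hsq : frobNorm (B * Aᵀ) ^ 2 ≤ (frobNorm B * specNorm A) ^ 2 := by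
    rw [sq_frobNorm, mul_pow, sq_frobNorm]
    calc (∑ i, ∑ j, ((B * Aᵀ) i j) ^ 2)
        ≤ ∑ i, specNorm A ^ 2 * ∑ j, (B i j) ^ 2 := Finset.sum_le_sum fun i _ => row i
      _ = (∑ i, ∑ j, (B i j) ^ 2) * specNorm A ^ 2 := by
          rw [← Finset.mul_sum]; ring
  nlinarith [hsq, frobNorm_nonneg (B * Aᵀ),
    mul_nonneg (frobNorm_nonneg B) (specNorm_nonneg A)]

private lemma matInner_adj {n₁ n₂ m : ℕ} (As : Fin m → Matrix (Fin n₁) (Fin n₂) ℝ)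
    (y : Fin m → ℝ) (N : Matrix (Fin n₁) (Fin n₂) ℝ) :
    matInner (senseAdj As y) N = ∑ i, y i * senseOp As N i := by
  rw [matInner_eq]
  have h1 : ∀ a b, senseAdj As y a b = ∑ k, y k * As k a b := by
    intro a b; simp [senseAdj, Matrix.sum_apply]
  calc ∑ a, ∑ b, senseAdj As y a b * N a b
      = ∑ a, ∑ b, ∑ k, y k * (As k a b * N a b) := by
        refine Finset.sum_congr rfl fun a _ => Finset.sum_congr rfl fun b _ => ?_
        rw [h1, Finset.sum_mul]
        exact Finset.sum_congr rfl fun k _ => by ring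
    _ = ∑ a, ∑ k, ∑ b, y k * (As k a b * N a b) :=
        Finset.sum_congr rfl fun a _ => Finset.sum_comm
    _ = ∑ k, ∑ a, ∑ b, y k * (As k a b * N a b) := Finset.sum_comm
    _ = ∑ k, y k * senseOp As N k := by
        refine Finset.sum_congr rfl fun k _ => ?_
        rw [senseOp, matInner_eq, Finset.mul_sum]
        exact Finset.sum_congr rfl fun a _ => by rw [Finset.mul_sum]

private lemma matInner_sub_left {n₁ n₂ : ℕ} (X Y N : Matrix (Fin n₁) (Fin n₂) ℝ) :
    matInner (X - Y) N = matInner X N - matInner Y N := by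
  simp only [matInner_eq, Matrix.sub_apply, sub_mul, Finset.sum_sub_distrib]

private lemma matInner_trace_identity {n₁ n₂ r : ℕ} (C : Matrix (Fin n₁) (Fin n₂) ℝ)
    (A : Matrix (Fin n₂) (Fin r) ℝ) :
    matInner C (C * A * Aᵀ) = frobNorm (C * A) ^ 2 := by
  have h1 : matInner C (C * A * Aᵀ) = matInner (C * A) (C * A) := by
    rw [matInner, matInner, Matrix.transpose_mul, Matrix.transpose_transpose,
      ← Matrix.mul_assoc, Matrix.trace_mul_comm (A * (C * A)ᵀ) C,
      ← Matrix.mul_assoc, Matrix.trace_mul_comm (C * A) (C * A)ᵀ, Matrix.mul_assoc]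
  rw [h1, matInner_eq, sq_frobNorm]
  exact Finset.sum_congr rfl fun i _ => Finset.sum_congr rfl fun j _ => (sq _).symm

/-- consequence of Lemma 5: under the rank-`2r` RIP with constant
`δ`, for every `M₁` of rank at most `r` and every `A ∈ ℝ^{n₂×r}`,
`‖[(𝒜*𝒜 − ℐ)(M₁)]A‖_F ≤ δ‖M₁‖_F‖A‖`. -/
theorem rip_operator_deviation_bound
    {n₁ n₂ r m : ℕ} (As : Fin m → Matrix (Fin n₁) (Fin n₂) ℝ) (δ : ℝ)
    (hRIP : HasRIP As (2 * r) δ)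
    (M₁ : Matrix (Fin n₁) (Fin n₂) ℝ) (h₁ : M₁.rank ≤ r)
    (A : Matrix (Fin n₂) (Fin r) ℝ) :
    frobNorm ((senseAdj As (senseOp As M₁) - M₁) * A) ≤
      δ * frobNorm M₁ * specNorm A := by
  --
  have hδ0 := hRIP.1
  set C := senseAdj As (senseOp As M₁) - M₁ with hC
  set N := C * A * Aᵀ with hNdef
  have hrankN : N.rank ≤ r :=
    (Matrix.rank_mul_le_right _ _).trans (Matrix.rank_le_height Aᵀ)
  have hkey : frobNorm (C * A) ^ 2 =
      (∑ i, senseOp As M₁ i * senseOp As N i) - matInner M₁ N := by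
    rw [← matInner_trace_identity C A, ← hNdef, hC, matInner_sub_left, matInner_adj]
  have hcross := rip_cross As δ hRIP M₁ N h₁ hrankN
  have hNle : frobNorm N ≤ frobNorm (C * A) * specNorm A := frob_mul_transpose_le (C * A) A
  have hchain : frobNorm (C * A) ^ 2 ≤ δ * frobNorm M₁ * (frobNorm (C * A) * specNorm A) := by
    rw [hkey]
    exact hcross.trans (mul_le_mul_of_nonneg_left hNle
      (mul_nonneg hδ0 (frobNorm_nonneg M₁)))
  rcases eq_or_lt_of_le (frobNorm_nonneg (C * A)) with hB0 | hB0
  · rw [← hB0]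
    exact mul_nonneg (mul_nonneg hδ0 (frobNorm_nonneg M₁)) (specNorm_nonneg A)
  · nlinarith [hchain, hB0]
end

section
/- Suppose Z = [X; Y] ∈ ℝ^{(n₁+n₂)×r} is aligned with Z⋆, i.e., the identity matrix I_r is a minimizer of ‖XP − X⋆‖_F² + ‖YP⁻ᵀ − Y⋆‖_F² over invertible P ∈ ℝ^{r×r}. Then, writing E_x = X − X⋆, the following exact identity holds: ⟨X − X⋆, (XYᵀ − M⋆)Y⟩ = ‖Y E_xᵀ‖_F² + ‖Xᵀ E_x‖_F² − Tr(Xᵀ E_x E_xᵀ E_x). -/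
open Matrix BigOperators

noncomputable def sqF {m n : ℕ} (A : Matrix (Fin m) (Fin n) ℝ) : ℝ := ∑ i, ∑ j, (A i j)^2
noncomputable def ipF {m n : ℕ} (A B : Matrix (Fin m) (Fin n) ℝ) : ℝ := ∑ i, ∑ j, A i j * B i j

lemma sqF_expand {m n : ℕ} (A B : Matrix (Fin m) (Fin n) ℝ) (t : ℝ) :
    sqF (A + t • B) = sqF A + 2 * ipF A B * t + sqF B * t^2 := by
  simp only [sqF, ipF, Matrix.add_apply, Matrix.smul_apply, smul_eq_mul]
  have h : ∀ i j, (A i j + t * B i j)^2 = A i j^2 + 2*(A i j * B i j)*t + (B i j)^2*t^2 := by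
    intros; ring
  simp_rw [h, Finset.sum_add_distrib, ← Finset.sum_mul, ← Finset.mul_sum]

lemma frob_sq {m n : ℕ} (A : Matrix (Fin m) (Fin n) ℝ) : (frobNorm A)^2 = sqF A := by
  rw [frobNorm, Real.sq_sqrt]
  · rfl
  · positivity

lemma sqF_eq_trace {m n : ℕ} (A : Matrix (Fin m) (Fin n) ℝ) : sqF A = Matrix.trace (Aᵀ * A) := by
  simp only [sqF, Matrix.trace, Matrix.mul_apply, Matrix.diag, Matrix.transpose_apply, sq]
  rw [Finset.sum_comm]

lemma ipF_eq_trace {m n : ℕ} (A B : Matrix (Fin m) (Fin n) ℝ) :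
    ipF A B = Matrix.trace (Bᵀ * A) := by
  simp only [ipF, Matrix.trace, Matrix.mul_apply, Matrix.diag, Matrix.transpose_apply]
  rw [Finset.sum_comm]
  exact Finset.sum_congr rfl fun j _ => Finset.sum_congr rfl fun i _ => mul_comm _ _

lemma aligned_key {n₁ n₂ r : ℕ} (X Xs : Matrix (Fin n₁) (Fin r) ℝ)
    (Y Ys : Matrix (Fin n₂) (Fin r) ℝ)
    (haligned : ∀ P : Matrix (Fin r) (Fin r) ℝ, IsUnit P →
      (frobNorm (X - Xs)) ^ 2 + (frobNorm (Y - Ys)) ^ 2 ≤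
        (frobNorm (X * P - Xs)) ^ 2 + (frobNorm (Y * (P⁻¹)ᵀ - Ys)) ^ 2) :
    Xᵀ * (X - Xs) = (Y - Ys)ᵀ * Y := by
  ext k l
  set E := X - Xs with hE
  set F := Y - Ys with hF
  set S : Matrix (Fin r) (Fin r) ℝ := Matrix.single k l 1 with hS
  set δ : ℝ := if l = k then 1 else 0 with hδ
  have hSS : S * S = δ • S := by
    by_cases h : l = k
    · rw [hS, hδ, if_pos h, one_smul, h, Matrix.single_mul_single_same 1 k k k 1, mul_one]
    · rw [hS, hδ, if_neg h, zero_smul, Matrix.single_mul_single_of_ne 1 k l k h 1]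
  set A : ℝ := ipF E (X * S) with hA
  set B : ℝ := ipF F (Y * Sᵀ) with hB
  set c1 : ℝ := sqF (X * S) with hc1
  set c2 : ℝ := sqF (Y * Sᵀ) with hc2
  set sfun : ℝ → ℝ := fun t => t / (1 + t * δ) with hsfun
  set g : ℝ → ℝ := fun t =>
    (sqF E + 2 * A * t + c1 * t^2) + (sqF F - 2 * B * sfun t + c2 * (sfun t)^2) with hg
  have hδ01 : δ = 0 ∨ δ = 1 := by rw [hδ]; split <;> simp
  have hden : ∀ t : ℝ, |t| < 1/2 → 1 + t * δ ≠ 0 := by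
    intro t ht
    rcases hδ01 with h | h <;> rw [h]
    · norm_num
    · rw [mul_one]; cases abs_lt.mp ht; nlinarith
  have hmin : ∀ t : ℝ, |t| < 1/2 → g 0 ≤ g t := by
    intro t ht
    have hne := hden t ht
    have hts : t - sfun t - t * sfun t * δ = 0 := by
      rw [hsfun]; field_simp; ring
    have hmulval : (1 + t•S) * (1 + (-(sfun t))•S) = 1 := by
      have h1 : (1 + t•S) * (1 + (-(sfun t))•S)
          = 1 + (-(sfun t))•S + t•S + (t * -(sfun t)) • (S*S) := by
        simp only [mul_add, add_mul, one_mul, mul_one, Matrix.smul_mul, Matrix.mul_smul,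
          smul_smul]
        module
      rw [h1, hSS, smul_smul]
      have h2 : t * -sfun t * δ = -(t * sfun t * δ) := by ring
      rw [h2, show -(t * sfun t * δ) = (sfun t - t) + (t - sfun t - t * sfun t * δ) by ring,
        hts, add_zero]
      module
    have hunit : IsUnit (1 + t•S) := (Matrix.isUnit_iff_isUnit_det _).mpr (Matrix.isUnit_det_of_right_inverse hmulval)
    have hinv : (1 + t•S)⁻¹ = 1 + (-(sfun t))•S := Matrix.inv_eq_right_inv hmulval
    have h := haligned (1 + t•S) hunit
    have e1 : X * (1 + t•S) - Xs = E + t • (X*S) := by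
      rw [Matrix.mul_add, Matrix.mul_one, Matrix.mul_smul, hE]; abel
    have e2 : Y * ((1 + t•S)⁻¹)ᵀ - Ys = F + (-(sfun t)) • (Y*Sᵀ) := by
      rw [hinv, Matrix.transpose_add, Matrix.transpose_smul, Matrix.transpose_one,
        Matrix.mul_add, Matrix.mul_one, Matrix.mul_smul, hF]; abel
    rw [e1, e2, frob_sq, frob_sq, frob_sq, frob_sq, sqF_expand, sqF_expand] at h
    have hg0 : g 0 = sqF E + sqF F := by simp [hg, hsfun]
    have hgt : g t = sqF E + 2 * ipF E (X*S) * t + sqF (X*S) * t^2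
        + (sqF F + 2 * ipF F (Y*Sᵀ) * (-(sfun t)) + sqF (Y*Sᵀ) * (-(sfun t))^2) := by
      rw [hg, ← hA, ← hB, ← hc1, ← hc2]; ring
    rw [hg0, hgt]
    exact h
  have hlocmin : IsLocalMin g 0 := by
    filter_upwards [Metric.ball_mem_nhds (0:ℝ) (by norm_num : (0:ℝ) < 1/2)] with t ht
    exact hmin t (by simpa [Real.dist_eq] using ht)
  have hsderiv : HasDerivAt sfun 1 0 := by
    have h1 : HasDerivAt (fun t : ℝ => t) 1 0 := hasDerivAt_id 0
    have h2 : HasDerivAt (fun t : ℝ => 1 + t * δ) δ 0 := by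
      simpa using ((hasDerivAt_id 0).mul_const δ).const_add 1
    have := h1.div h2 (by norm_num)
    rw [hsfun]
    simpa [Pi.div_def] using this
  have hgderiv : HasDerivAt g (2*A - 2*B) 0 := by
    have hs0 : sfun 0 = 0 := by rw [hsfun]; simp
    have hA' : HasDerivAt (fun t : ℝ => sqF E + 2*A*t + c1*t^2) (2*A) 0 := by
      have := (((hasDerivAt_id (0:ℝ)).const_mul (2*A)).const_add (sqF E)).add
        ((hasDerivAt_pow 2 (0:ℝ)).const_mul c1)
      simpa [Pi.add_def] using this
    have hB' : HasDerivAt (fun t : ℝ => sqF F - 2*B*sfun t + c2*(sfun t)^2) (-(2*B)) 0 := by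
      have h1 : HasDerivAt (fun t => sqF F - 2*B*sfun t) (-(2*B*1)) 0 :=
        (hsderiv.const_mul (2*B)).const_sub (sqF F)
      have h2 : HasDerivAt (fun t => c2 * (sfun t)^2) (c2*(2 * sfun 0 ^ 1 * 1)) 0 :=
        (hsderiv.pow 2).const_mul c2
      rw [hs0] at h2
      have := h1.add h2
      simpa [Pi.add_def] using this
    have := hA'.add hB'
    rw [hg, show 2*A - 2*B = 2*A + -(2*B) by ring]
    exact this
  have hzero : 2*A - 2*B = 0 := hlocmin.hasDerivAt_eq_zero hgderiv
  have hXS : ∀ (i : Fin n₁) (j : Fin r), (X * S) i j = if j = l then X i k else 0 := by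
    intro i j
    rw [hS]
    simp [Matrix.mul_apply, Matrix.single, Matrix.of_apply, ite_and,
      Finset.sum_ite_eq, eq_comm]
  have hYS : ∀ (i : Fin n₂) (j : Fin r), (Y * Sᵀ) i j = if j = k then Y i l else 0 := by
    intro i j
    rw [hS]
    simp [Matrix.mul_apply, Matrix.transpose_apply, Matrix.single, Matrix.of_apply,
      ite_and, Finset.sum_ite_eq, eq_comm]
  have haval : A = (Xᵀ * E) k l := by
    rw [hA, ipF]
    simp only [hXS, mul_ite, mul_zero, Finset.sum_ite_eq' Finset.univ l, Finset.mem_univ, if_pos]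
    rw [Matrix.mul_apply]
    exact Finset.sum_congr rfl fun i _ => mul_comm _ _
  have hbval : B = (Fᵀ * Y) k l := by
    rw [hB, ipF]
    simp only [hYS, mul_ite, mul_zero, Finset.sum_ite_eq' Finset.univ k, Finset.mem_univ, if_pos]
    rw [Matrix.mul_apply]
    rfl
  rw [← haval, ← hbval]
  linarith

lemma trace_alg {n₁ n₂ r : ℕ} (X E : Matrix (Fin n₁) (Fin r) ℝ)
    (Y F : Matrix (Fin n₂) (Fin r) ℝ) (key : Xᵀ * E = Fᵀ * Y) :
    Matrix.trace (((X * Yᵀ - (X - E) * (Y - F)ᵀ) * Y)ᵀ * E)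
      = Matrix.trace ((Y * Eᵀ)ᵀ * (Y * Eᵀ)) + Matrix.trace ((Xᵀ * E)ᵀ * (Xᵀ * E))
        - Matrix.trace (Xᵀ * E * Eᵀ * E) := by
  have hN : X * Yᵀ - (X - E) * (Y - F)ᵀ = X * Fᵀ + E * Yᵀ - E * Fᵀ := by
    rw [Matrix.transpose_sub, Matrix.sub_mul, Matrix.mul_sub, Matrix.mul_sub]
    abel
  have hNY : (X * Yᵀ - (X - E) * (Y - F)ᵀ) * Y
      = X * (Xᵀ * E) + E * (Yᵀ * Y) - E * (Xᵀ * E) := by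
    rw [hN, key, Matrix.sub_mul, Matrix.add_mul, Matrix.mul_assoc, Matrix.mul_assoc,
      Matrix.mul_assoc]
  rw [hNY]
  rw [Matrix.transpose_sub, Matrix.transpose_add, Matrix.sub_mul, Matrix.add_mul,
    Matrix.trace_sub, Matrix.trace_add]
  have t1 : Matrix.trace ((X * (Xᵀ * E))ᵀ * E) = Matrix.trace ((Xᵀ * E)ᵀ * (Xᵀ * E)) := by
    rw [Matrix.transpose_mul, Matrix.mul_assoc]
  have sw : ∀ {p q : ℕ} (A B : Matrix (Fin p) (Fin q) ℝ),
      Matrix.trace (Aᵀ * B) = Matrix.trace (Bᵀ * A) := by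
    intro p q A B
    rw [← Matrix.trace_transpose (Aᵀ * B), Matrix.transpose_mul, Matrix.transpose_transpose]
  have t2 : Matrix.trace ((E * (Yᵀ * Y))ᵀ * E) = Matrix.trace ((Y * Eᵀ)ᵀ * (Y * Eᵀ)) := by
    rw [sw, Matrix.transpose_mul, Matrix.transpose_transpose,
      Matrix.trace_mul_comm Eᵀ (E * (Yᵀ * Y))]
    simp only [Matrix.mul_assoc]
  have t3 : Matrix.trace ((E * (Xᵀ * E))ᵀ * E) = Matrix.trace (Xᵀ * E * Eᵀ * E) := by
    rw [sw, ← Matrix.mul_assoc, Matrix.trace_mul_comm]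
    simp only [Matrix.mul_assoc]
  rw [t1, t2, t3]
  ring

/-- exact expansion in the proof of Lemma 3: if `Z = [X; Y]` is
aligned with `Z⋆`, then with `E_x = X − X⋆`,
`⟨X − X⋆, (XYᵀ − M⋆)Y⟩ = ‖Y E_xᵀ‖_F² + ‖Xᵀ E_x‖_F² − Tr(Xᵀ E_x E_xᵀ E_x)`. -/
theorem gradient_dominance_exact_identity
    {n₁ n₂ r : ℕ}
    (Ustar : Matrix (Fin n₁) (Fin r) ℝ) (Vstar : Matrix (Fin n₂) (Fin r) ℝ)
    (d : Fin r → ℝ) (hd : ∀ i, 0 < d i)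
    (hU : Ustarᵀ * Ustar = 1) (hV : Vstarᵀ * Vstar = 1)
    (Mstar : Matrix (Fin n₁) (Fin n₂) ℝ)
    (hM : Mstar = Ustar * Matrix.diagonal d * Vstarᵀ)
    (Xstar : Matrix (Fin n₁) (Fin r) ℝ) (Ystar : Matrix (Fin n₂) (Fin r) ℝ)
    (hXs : Xstar = Ustar * Matrix.diagonal (fun i => Real.sqrt (d i)))
    (hYs : Ystar = Vstar * Matrix.diagonal (fun i => Real.sqrt (d i)))
    (X : Matrix (Fin n₁) (Fin r) ℝ) (Y : Matrix (Fin n₂) (Fin r) ℝ)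
    (haligned : ∀ P : Matrix (Fin r) (Fin r) ℝ, IsUnit P →
      (frobNorm (X - Xstar)) ^ 2 + (frobNorm (Y - Ystar)) ^ 2 ≤
        (frobNorm (X * P - Xstar)) ^ 2 + (frobNorm (Y * (P⁻¹)ᵀ - Ystar)) ^ 2) :
    matInner (X - Xstar) ((X * Yᵀ - Mstar) * Y) =
      (frobNorm (Y * (X - Xstar)ᵀ)) ^ 2 + (frobNorm (Xᵀ * (X - Xstar))) ^ 2 -
        Matrix.trace (Xᵀ * (X - Xstar) * (X - Xstar)ᵀ * (X - Xstar)) := by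
  have key : Xᵀ * (X - Xstar) = (Y - Ystar)ᵀ * Y := aligned_key X Xstar Y Ystar haligned
  have hdd : Matrix.diagonal (fun i => Real.sqrt (d i)) *
      Matrix.diagonal (fun i => Real.sqrt (d i)) = Matrix.diagonal d := by
    rw [Matrix.diagonal_mul_diagonal]
    exact congrArg Matrix.diagonal (funext fun i => Real.mul_self_sqrt (hd i).le)
  have hMXY : Mstar = Xstar * Ystarᵀ := by
    rw [hM, hXs, hYs, Matrix.transpose_mul, Matrix.diagonal_transpose, ← hdd]
    simp only [Matrix.mul_assoc]
  have hsub : Mstar = (X - (X - Xstar)) * (Y - (Y - Ystar))ᵀ := by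
    have h1 : X - (X - Xstar) = Xstar := by abel
    have h2 : Y - (Y - Ystar) = Ystar := by abel
    rw [hMXY, h1, h2]
  unfold matInner
  rw [frob_sq, frob_sq, sqF_eq_trace, sqF_eq_trace, hsub]
  exact trace_alg X (X - Xstar) Y (Y - Ystar) key
end
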